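/- For every (λ_1,…,λ_p) ∈ (0,∞)^p, min_{1≤j≤p} λ_j^{-1} ε_{I_j}(1) ≤ ε(λ_1,…,λ_p). -/

import Mathlib

open MeasureTheory ProbabilityTheory Real Filter Topology
open scoped ProbabilityTheory

noncomputable section

/-- Marginal Fréchet-type distribution function `F_i(t) = exp(-σ t^(-1/η))` for `t > 0`. -/
def margF (σ η t : ℝ) : ℝ := if 0 < t then Real.exp (-σ * t ^ (-1 / η)) else 0

/-- Joint distribution function of the random vector `X`. -/
def jointF {Ω : Type*} [MeasureSpace Ω] {d : ℕ} (X : Fin d → Ω → ℝ) (t : Fin d → ℝ) : ℝ :=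
  (ℙ {ω | ∀ i, X i ω ≤ t i}).toReal

/-- Exponent function `ℓ(t) = -ln F_X(t)`. -/
def expo {Ω : Type*} [MeasureSpace Ω] {d : ℕ} (X : Fin d → Ω → ℝ) (t : Fin d → ℝ) : ℝ :=
  -Real.log (jointF X t)

/-- Block maximum `M(I_j) = max_{i ∈ I_j} F_i(X_i)`, where `I_j = {i | B i = j}`. -/
def blockMax {Ω : Type*} [MeasureSpace Ω] {d p : ℕ} (B : Fin d → Fin p) (σ : Fin d → ℝ)
    (η : ℝ) (X : Fin d → Ω → ℝ) (j : Fin p) (ω : Ω) : ℝ :=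
  sSup ((fun i => margF (σ i) η (X i ω)) '' {i | B i = j})

/-- Extremal dependence function
`ε(λ₁,…,λ_p) = E(max_j M(I_j)^(λ_j)) / (1 - E(max_j M(I_j)^(λ_j)))`. -/
def epsFun {Ω : Type*} [MeasureSpace Ω] {d p : ℕ} (B : Fin d → Fin p) (σ : Fin d → ℝ)
    (η : ℝ) (X : Fin d → Ω → ℝ) (l : Fin p → ℝ) : ℝ :=
  (∫ ω, ⨆ j, blockMax B σ η X j ω ^ l j ∂ℙ) /
    (1 - ∫ ω, ⨆ j, blockMax B σ η X j ω ^ l j ∂ℙ)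

/-- Single-block extremal dependence function `ε_{I_j}(λ)`. -/
def epsBlock {Ω : Type*} [MeasureSpace Ω] {d p : ℕ} (B : Fin d → Fin p) (σ : Fin d → ℝ)
    (η : ℝ) (X : Fin d → Ω → ℝ) (j : Fin p) (l : ℝ) : ℝ :=
  (∫ ω, blockMax B σ η X j ω ^ l ∂ℙ) / (1 - ∫ ω, blockMax B σ η X j ω ^ l ∂ℙ)

/-! ### Auxiliary lemmas -/

section Aux

lemma margF_nonneg (σ η t : ℝ) : 0 ≤ margF σ η t := by
  unfold margF; split_ifs
  · exact (Real.exp_pos _).le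
  · exact le_refl 0

lemma margF_lt_one {σ η : ℝ} (hσ : 0 < σ) (hη : 0 < η) (t : ℝ) : margF σ η t < 1 := by
  unfold margF; split_ifs with h
  · rw [Real.exp_lt_one_iff]
    have : 0 < t ^ (-1 / η) := Real.rpow_pos_of_pos h _
    nlinarith
  · exact one_pos

lemma measurable_margF (σ η : ℝ) : Measurable (margF σ η) := by
  have hrw : margF σ η = fun t =>
      if 0 < t then Real.exp (-σ * Real.exp (Real.log t * (-1 / η))) else 0 := by
    funext t
    unfold margF
    split_ifs with h
    · rw [Real.rpow_def_of_pos h]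
    · rfl
  rw [hrw]
  exact Measurable.ite measurableSet_Ioi
    ((measurable_const.mul ((Real.measurable_log.mul measurable_const).exp)).exp)
    measurable_const

/-- Characterization of `margF ≤ v` for `v ∈ (0,1)`. -/
lemma margF_le_iff {σ η v : ℝ} (hσ : 0 < σ) (hη : 0 < η) (hv0 : 0 < v) (hv1 : v < 1) (t : ℝ) :
    margF σ η t ≤ v ↔ t ≤ (σ / (-Real.log v)) ^ η := by
  have hlog : 0 < -Real.log v := by
    have := Real.log_neg hv0 hv1; linarith
  have hs : 0 < (σ / (-Real.log v)) ^ η :=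
    Real.rpow_pos_of_pos (div_pos hσ hlog) _
  unfold margF
  split_ifs with h
  · -- 0 < t
    rw [show (Real.exp (-σ * t ^ (-1 / η)) ≤ v) ↔ (-σ * t ^ (-1 / η) ≤ Real.log v) from by
      rw [← Real.log_le_log_iff (Real.exp_pos _) hv0, Real.log_exp]]
    have hne : η ≠ 0 := hη.ne'
    have hzneg : -1 / η < 0 := by
      rw [neg_div]; exact neg_lt_zero.mpr (by positivity)
    constructor
    · intro hle
      -- -σ * t ^ (-1/η) ≤ log v, i.e. (-log v)/σ ≤ t ^ (-1/η)
      have h1 : -Real.log v / σ ≤ t ^ (-1 / η) := by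
        rw [div_le_iff₀ hσ]
        nlinarith [Real.rpow_pos_of_pos h (-1 / η)]
      -- apply x ↦ x ^ (-η), which is antitone on positives
      have h2 : (t ^ (-1 / η)) ^ (-η) ≤ (-Real.log v / σ) ^ (-η) :=
        (Real.rpow_le_rpow_iff_of_neg (Real.rpow_pos_of_pos h _)
          (div_pos hlog hσ) (by linarith)).mpr h1
      have h3 : (t ^ (-1 / η)) ^ (-η) = t := by
        rw [← Real.rpow_mul h.le]
        have : -1 / η * -η = 1 := by field_simp
        rw [this, Real.rpow_one]
      have h4 : (-Real.log v / σ) ^ (-η) = (σ / -Real.log v) ^ η := by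
        rw [Real.rpow_neg (div_pos hlog hσ).le, ← Real.inv_rpow (div_pos hlog hσ).le,
          inv_div]
      rw [h3, h4] at h2
      exact h2
    · intro hle
      have h2 : (σ / -Real.log v) ^ (η * (-1/η)) ≤ t ^ (-1 / η) := by
        rw [Real.rpow_mul (div_pos hσ hlog).le]
        exact (Real.rpow_le_rpow_iff_of_neg hs h hzneg).mpr hle
      have h3 : η * (-1/η) = -1 := by field_simp
      rw [h3, Real.rpow_neg_one, inv_div] at h2
      -- h2 : -log v / σ ≤ t ^ (-1/η)
      rw [div_le_iff₀ hσ] at h2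
      nlinarith
  · -- t ≤ 0
    have hts : t ≤ (σ / -Real.log v) ^ η := le_trans (not_lt.mp h) hs.le
    simp [hv0.le, hts]

variable {Ω : Type*} [MeasureSpace Ω] [IsProbabilityMeasure (ℙ : Measure Ω)]

lemma blockFinset_nonempty {d p : ℕ} {B : Fin d → Fin p} (hB : Function.Surjective B)
    (j : Fin p) : (Finset.univ.filter (fun i => B i = j)).Nonempty := by
  obtain ⟨i, hi⟩ := hB j
  exact ⟨i, by simp [hi]⟩

lemma blockMax_eq_sup' {d p : ℕ} (B : Fin d → Fin p) (σ : Fin d → ℝ) (η : ℝ)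
    (X : Fin d → Ω → ℝ) (hB : Function.Surjective B) (j : Fin p) (ω : Ω) :
    blockMax B σ η X j ω = (Finset.univ.filter (fun i => B i = j)).sup'
      (blockFinset_nonempty hB j) (fun i => margF (σ i) η (X i ω)) := by
  rw [Finset.sup'_eq_csSup_image]
  unfold blockMax
  congr 1
  congr 1
  ext i
  simp

lemma measurable_finset_sup' {ι : Type*} (s : Finset ι) (hs : s.Nonempty)
    (f : ι → Ω → ℝ) (hf : ∀ i, Measurable (f i)) :
    Measurable (fun ω => s.sup' hs (fun i => f i ω)) := by
  induction hs using Finset.Nonempty.cons_induction with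
  | singleton a =>
      have h1 : (fun ω => ({a} : Finset ι).sup' (Finset.singleton_nonempty a)
          (fun i => f i ω)) = f a := by
        funext ω; simp
      rw [h1]; exact hf a
  | cons a s ha hs ih =>
      have h1 : (fun ω => (Finset.cons a s ha).sup' (Finset.cons_nonempty ha)
          (fun i => f i ω)) = fun ω => f a ω ⊔ s.sup' hs (fun i => f i ω) := by
        funext ω; exact Finset.sup'_cons hs (fun i => f i ω)
      rw [h1]
      exact (hf a).sup ih

lemma iSup_eq_sup' {p : ℕ} [NeZero p] (f : Fin p → ℝ) :
    (⨆ j, f j) = Finset.univ.sup' Finset.univ_nonempty f := by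
  rw [Finset.sup'_eq_csSup_image, Finset.coe_univ, Set.image_univ]
  rfl

lemma expo_antitone {d : ℕ} (X : Fin d → Ω → ℝ)
    (hpos : ∀ t : Fin d → ℝ, (∀ i, 0 < t i) → 0 < jointF X t)
    (t s : Fin d → ℝ) (ht : ∀ i, 0 < t i) (hts : ∀ i, t i ≤ s i) :
    expo X s ≤ expo X t := by
  unfold expo
  apply neg_le_neg
  apply Real.log_le_log (hpos t ht)
  unfold jointF
  apply ENNReal.toReal_mono (measure_ne_top _ _)
  apply measure_mono
  intro ω hω i
  exact le_trans (hω i) (hts i)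

end Aux

section Key

variable {Ω : Type*} [MeasureSpace Ω] [IsProbabilityMeasure (ℙ : Measure Ω)]

/-- The key expectation formula:
`E(⨆ j, M_j^{m_j}) = θ/(θ+1)` with `θ = ℓ((σ_i m_{B i})^η)`. -/
lemma keyE {d p : ℕ} (hd : 0 < d) (hp : 0 < p)
    (X : Fin d → Ω → ℝ) (hX : ∀ i, Measurable (X i))
    (σ : Fin d → ℝ) (hσ : ∀ i, 0 < σ i)
    (η : ℝ) (hη0 : 0 < η)
    (hmarg : ∀ i, ∀ t : ℝ, 0 < t →
      ℙ {ω | X i ω ≤ t} = ENNReal.ofReal (Real.exp (-σ i * t ^ (-1 / η))))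
    (hpos : ∀ t : Fin d → ℝ, (∀ i, 0 < t i) → 0 < jointF X t)
    (hhom : ∀ c : ℝ, 0 < c → ∀ t : Fin d → ℝ, (∀ i, 0 < t i) →
      expo X (fun i => c * t i) = c ^ (-1 / η) * expo X t)
    (B : Fin d → Fin p) (hB : Function.Surjective B)
    (m : Fin p → ℝ) (hm : ∀ j, 0 < m j) :
    (∫ ω, ⨆ j, blockMax B σ η X j ω ^ m j ∂ℙ)
      = expo X (fun i => (σ i * m (B i)) ^ η)
        / (expo X (fun i => (σ i * m (B i)) ^ η) + 1) := by
  haveI : NeZero p := ⟨hp.ne'⟩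
  haveI : Nonempty (Fin p) := ⟨⟨0, hp⟩⟩
  haveI : Nonempty (Fin d) := ⟨⟨0, hd⟩⟩
  set a : Fin d → ℝ := fun i => (σ i * m (B i)) ^ η with ha
  have ha_pos : ∀ i, 0 < a i := fun i =>
    Real.rpow_pos_of_pos (mul_pos (hσ i) (hm (B i))) _
  set θ : ℝ := expo X a with hθdef
  set M : Fin p → Ω → ℝ := blockMax B σ η X with hM
  set Y : Ω → ℝ := fun ω => ⨆ j, M j ω ^ m j with hY
  -- basic facts on M
  have hMle : ∀ j ω (v : ℝ), M j ω ≤ v ↔ ∀ i, B i = j → margF (σ i) η (X i ω) ≤ v := by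
    intro j ω v
    rw [hM, blockMax_eq_sup' B σ η X hB j ω, Finset.sup'_le_iff]
    constructor
    · intro h i hi; exact h i (Finset.mem_filter.mpr ⟨Finset.mem_univ i, hi⟩)
    · intro h i hi; exact h i (Finset.mem_filter.mp hi).2
  have hM0 : ∀ j ω, 0 ≤ M j ω := by
    intro j ω
    obtain ⟨i, hi⟩ := hB j
    rw [hM, blockMax_eq_sup' B σ η X hB j ω]
    exact le_trans (margF_nonneg (σ i) η (X i ω))
      (Finset.le_sup' (fun i => margF (σ i) η (X i ω)) (Finset.mem_filter.mpr ⟨Finset.mem_univ i, hi⟩))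
  have hM1 : ∀ j ω, M j ω < 1 := by
    intro j ω
    rw [hM, blockMax_eq_sup' B σ η X hB j ω, Finset.sup'_lt_iff]
    intro i _
    exact margF_lt_one (hσ i) hη0 _
  have hMmeas : ∀ j, Measurable (M j) := by
    intro j
    have : M j = fun ω => (Finset.univ.filter (fun i => B i = j)).sup'
        (blockFinset_nonempty hB j) (fun i => margF (σ i) η (X i ω)) := by
      funext ω; exact blockMax_eq_sup' B σ η X hB j ω
    rw [this]
    exact measurable_finset_sup' _ _ _
      (fun i => (measurable_margF (σ i) η).comp (hX i))
  -- facts on Y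
  have hbdd : ∀ ω, BddAbove (Set.range fun j => M j ω ^ m j) :=
    fun ω => Set.Finite.bddAbove (Set.finite_range _)
  have hY0 : ∀ ω, 0 ≤ Y ω := by
    intro ω
    exact le_trans (Real.rpow_nonneg (hM0 ⟨0, hp⟩ ω) _) (le_ciSup (hbdd ω) ⟨0, hp⟩)
  have hY1 : ∀ ω, Y ω ≤ 1 := by
    intro ω
    exact ciSup_le fun j => Real.rpow_le_one (hM0 j ω) (hM1 j ω).le (hm j).le
  have hYmeas : Measurable Y := by
    have : Y = fun ω => Finset.univ.sup' Finset.univ_nonempty (fun j => M j ω ^ m j) := by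
      funext ω; exact iSup_eq_sup' _
    rw [this]
    apply measurable_finset_sup'
    intro j
    have : (fun ω => M j ω ^ m j)
        = fun ω => if M j ω = 0 then 0 else Real.exp (Real.log (M j ω) * m j) := by
      funext ω
      split_ifs with h
      · rw [h, Real.zero_rpow (hm j).ne']
      · rw [Real.rpow_def_of_pos (lt_of_le_of_ne (hM0 j ω) (Ne.symm h))]
    rw [this]
    exact Measurable.ite ((hMmeas j) (MeasurableSet.singleton 0))
      measurable_const (((hMmeas j).log.mul measurable_const).exp)
  have hYint : Integrable Y ℙ := by
    apply Integrable.mono' (integrable_const (1 : ℝ)) hYmeas.aestronglyMeasurable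
    apply Filter.Eventually.of_forall
    intro ω
    rw [Real.norm_eq_abs, abs_of_nonneg (hY0 ω)]
    exact hY1 ω
  -- positivity of θ
  have hjFa : 0 < jointF X a := hpos a ha_pos
  have hjFa1 : jointF X a < 1 := by
    have hsub : {ω | ∀ i, X i ω ≤ a i} ⊆ {ω | X ⟨0, hd⟩ ω ≤ a ⟨0, hd⟩} :=
      fun ω hω => hω ⟨0, hd⟩
    have h1 : jointF X a ≤ (ℙ {ω | X ⟨0, hd⟩ ω ≤ a ⟨0, hd⟩}).toReal :=
      ENNReal.toReal_mono (measure_ne_top _ _) (measure_mono hsub)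
    rw [hmarg ⟨0, hd⟩ (a ⟨0, hd⟩) (ha_pos _),
      ENNReal.toReal_ofReal (Real.exp_nonneg _)] at h1
    have h2 : Real.exp (-σ ⟨0, hd⟩ * a ⟨0, hd⟩ ^ (-1 / η)) < 1 := by
      rw [Real.exp_lt_one_iff]
      have := Real.rpow_pos_of_pos (ha_pos ⟨0, hd⟩) (-1 / η)
      nlinarith [hσ (⟨0, hd⟩ : Fin d)]
    linarith
  have hθpos : 0 < θ := by
    rw [hθdef]
    unfold expo
    have := Real.log_neg hjFa hjFa1
    linarith
  -- the distribution function of Y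
  have hdist : ∀ u : ℝ, 0 < u → u < 1 → (ℙ {ω | Y ω ≤ u}).toReal = u ^ θ := by
    intro u hu0 hu1
    set c : ℝ := (-Real.log u) ^ (-η) with hc
    have hlogu : 0 < -Real.log u := by have := Real.log_neg hu0 hu1; linarith
    have hcpos : 0 < c := Real.rpow_pos_of_pos hlogu _
    have hevent : {ω | Y ω ≤ u} = {ω | ∀ i, X i ω ≤ c * a i} := by
      ext ω
      simp only [Set.mem_setOf_eq]
      rw [hY]
      rw [ciSup_le_iff (hbdd ω)]
      have step1 : ∀ j, (M j ω ^ m j ≤ u ↔ M j ω ≤ u ^ (m j)⁻¹) := fun j =>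
        (Real.le_rpow_inv_iff_of_pos (hM0 j ω) hu0.le (hm j)).symm
      have hv0 : ∀ j, 0 < u ^ (m j)⁻¹ := fun j => Real.rpow_pos_of_pos hu0 _
      have hv1 : ∀ j, u ^ (m j)⁻¹ < 1 := fun j =>
        Real.rpow_lt_one hu0.le hu1 (inv_pos.mpr (hm j))
      have hout : ∀ i : Fin d, (σ i / (-Real.log (u ^ (m (B i))⁻¹))) ^ η = c * a i := by
        intro i
        rw [Real.log_rpow hu0]
        have hlne : Real.log u ≠ 0 := by intro h0; rw [h0] at hlogu; norm_num at hlogu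
        have hrw : σ i / -((m (B i))⁻¹ * Real.log u) = σ i * m (B i) / (-Real.log u) := by
          field_simp
        rw [hrw, Real.div_rpow (mul_pos (hσ i) (hm (B i))).le hlogu.le]
        rw [div_eq_mul_inv, ← Real.rpow_neg hlogu.le]
        ring
      constructor
      · intro h i
        have h1 := ((hMle (B i) ω _).mp ((step1 (B i)).mp (h (B i)))) i rfl
        rw [margF_le_iff (hσ i) hη0 (hv0 (B i)) (hv1 (B i))] at h1
        rwa [hout i] at h1
      · intro h j
        rw [step1 j, hMle]
        intro i hi
        rw [margF_le_iff (hσ i) hη0 (hv0 j) (hv1 j)]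
        rw [← hi, hout i]
        exact h i
    rw [hevent]
    have hjF : 0 < jointF X (fun i => c * a i) :=
      hpos _ (fun i => mul_pos hcpos (ha_pos i))
    have hval : jointF X (fun i => c * a i) = u ^ θ := by
      have hexp : expo X (fun i => c * a i) = (-Real.log u) * θ := by
        rw [hhom c hcpos a ha_pos]
        congr 1
        rw [hc, ← Real.rpow_mul hlogu.le]
        have : -η * (-1 / η) = 1 := by field_simp
        rw [this, Real.rpow_one]
      have : jointF X (fun i => c * a i) = Real.exp (-expo X (fun i => c * a i)) := by
        unfold expo
        rw [neg_neg, Real.exp_log hjF]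
      rw [this, hexp, Real.rpow_def_of_pos hu0]
      ring_nf
    have : (ℙ {ω | ∀ i, X i ω ≤ c * a i}).toReal = jointF X (fun i => c * a i) := rfl
    rw [this, hval]
  -- complement version
  have hmeasYle : ∀ u : ℝ, MeasurableSet {ω | Y ω ≤ u} := fun u =>
    hYmeas measurableSet_Iic
  have hcompl : ∀ u : ℝ, 0 < u → u < 1 → (ℙ {ω | u < Y ω}).toReal = 1 - u ^ θ := by
    intro u hu0 hu1
    have hset : {ω | u < Y ω} = {ω | Y ω ≤ u}ᶜ := by
      ext ω; simp [not_le]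
    rw [hset, measure_compl (hmeasYle u) (measure_ne_top _ _), measure_univ,
      ENNReal.toReal_sub_of_le (by
        rw [← measure_univ (μ := (ℙ : Measure Ω))]
        exact measure_mono (Set.subset_univ _)) (by simp), ENNReal.toReal_one,
      hdist u hu0 hu1]
  -- layer cake
  rw [Integrable.integral_eq_integral_meas_lt hYint (Filter.Eventually.of_forall hY0)]
  have hcong : Set.EqOn (fun u => ENNReal.toReal (ℙ {ω | u < Y ω}))
      (Set.indicator (Set.Ioc (0:ℝ) 1) (fun u => 1 - u ^ θ)) (Set.Ioi 0) := by
    intro u hu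
    have hu0 : (0:ℝ) < u := hu
    show ENNReal.toReal (ℙ {ω | u < Y ω})
      = Set.indicator (Set.Ioc (0:ℝ) 1) (fun u => 1 - u ^ θ) u
    rcases lt_trichotomy u 1 with h | h | h
    · rw [Set.indicator_of_mem (Set.mem_Ioc.mpr ⟨hu0, h.le⟩)]
      exact hcompl u hu0 h
    · subst h
      rw [Set.indicator_of_mem (Set.mem_Ioc.mpr ⟨hu0, le_refl _⟩)]
      have : {ω | (1:ℝ) < Y ω} = ∅ := by
        ext ω; simp only [Set.mem_setOf_eq, Set.mem_empty_iff_false, iff_false, not_lt]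
        exact hY1 ω
      rw [this]
      simp [Real.one_rpow]
    · rw [Set.indicator_of_notMem (by simp [Set.mem_Ioc, not_le.mpr h])]
      have : {ω | u < Y ω} = ∅ := by
        ext ω; simp only [Set.mem_setOf_eq, Set.mem_empty_iff_false, iff_false, not_lt]
        exact le_trans (hY1 ω) h.le
      rw [this]
      simp
  change ∫ t in Set.Ioi 0, (ℙ {ω | t < Y ω}).toReal = θ / (θ + 1)
  rw [setIntegral_congr_fun measurableSet_Ioi hcong,
    setIntegral_indicator measurableSet_Ioc,
    Set.inter_eq_right.mpr Set.Ioc_subset_Ioi_self,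
    ← intervalIntegral.integral_of_le zero_le_one,
    intervalIntegral.integral_sub intervalIntegrable_const
      (intervalIntegral.intervalIntegrable_rpow (Or.inl hθpos.le)),
    intervalIntegral.integral_const,
    integral_rpow (Or.inl (by linarith : (-1:ℝ) < θ))]
  rw [Real.one_rpow, Real.zero_rpow (by positivity : θ + 1 ≠ 0)]
  have hθ1 : θ + 1 ≠ 0 := by positivity
  field_simp
  simp only [sub_zero, smul_eq_mul]
  ring

end Key

theorem statement5
    {Ω : Type*} [MeasureSpace Ω] [IsProbabilityMeasure (ℙ : Measure Ω)]
    {d p : ℕ} (hd : 0 < d) (hp : 0 < p)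
    (X : Fin d → Ω → ℝ) (hX : ∀ i, Measurable (X i))
    (σ : Fin d → ℝ) (hσ : ∀ i, 0 < σ i)
    (η : ℝ) (hη0 : 0 < η) (hη1 : η ≤ 1)
    (hmarg : ∀ i, ∀ t : ℝ, 0 < t →
      ℙ {ω | X i ω ≤ t} = ENNReal.ofReal (Real.exp (-σ i * t ^ (-1 / η))))
    (hpos : ∀ t : Fin d → ℝ, (∀ i, 0 < t i) → 0 < jointF X t)
    (hhom : ∀ c : ℝ, 0 < c → ∀ t : Fin d → ℝ, (∀ i, 0 < t i) →
      expo X (fun i => c * t i) = c ^ (-1 / η) * expo X t)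
    (B : Fin d → Fin p) (hB : Function.Surjective B)
    (l : Fin p → ℝ) (hl : ∀ j, 0 < l j) :
    (⨅ j, (l j)⁻¹ * epsBlock B σ η X j 1) ≤ epsFun B σ η X l := by
  haveI : NeZero p := ⟨hp.ne'⟩
  haveI : Nonempty (Fin p) := ⟨⟨0, hp⟩⟩
  set j0 : Fin p := ⟨0, hp⟩ with hj0def
  set m : Fin p → ℝ := fun j => max 1 (l j / l j0) with hmdef
  have hm : ∀ j, 0 < m j := fun j => lt_of_lt_of_le one_pos (le_max_left _ _)
  have hmj0 : m j0 = 1 := by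
    rw [hmdef]
    simp [div_self (hl j0).ne']
  -- abbreviations
  set θl : ℝ := expo X (fun i => (σ i * l (B i)) ^ η) with hθl
  set θm : ℝ := expo X (fun i => (σ i * m (B i)) ^ η) with hθm
  have hEl := keyE hd hp X hX σ hσ η hη0 hmarg hpos hhom B hB l hl
  have hEm := keyE hd hp X hX σ hσ η hη0 hmarg hpos hhom B hB m hm
  -- positivity of θl, θm
  have hθl_pos : 0 < θl := by
    have hjp := hpos (fun i => (σ i * l (B i)) ^ η)
      (fun i => Real.rpow_pos_of_pos (mul_pos (hσ i) (hl (B i))) _)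
    have hj1 : jointF X (fun i => (σ i * l (B i)) ^ η) < 1 := by
      have hsub : {ω | ∀ i, X i ω ≤ (σ i * l (B i)) ^ η}
          ⊆ {ω | X ⟨0, hd⟩ ω ≤ (σ ⟨0, hd⟩ * l (B ⟨0, hd⟩)) ^ η} := fun ω hω => hω _
      have h1 : jointF X (fun i => (σ i * l (B i)) ^ η)
          ≤ (ℙ {ω | X ⟨0, hd⟩ ω ≤ (σ ⟨0, hd⟩ * l (B ⟨0, hd⟩)) ^ η}).toReal :=
        ENNReal.toReal_mono (measure_ne_top _ _) (measure_mono hsub)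
      rw [hmarg ⟨0, hd⟩ _ (Real.rpow_pos_of_pos (mul_pos (hσ _) (hl _)) _),
        ENNReal.toReal_ofReal (Real.exp_nonneg _)] at h1
      have h2 : Real.exp (-σ ⟨0, hd⟩ * ((σ ⟨0, hd⟩ * l (B ⟨0, hd⟩)) ^ η) ^ (-1 / η)) < 1 := by
        rw [Real.exp_lt_one_iff]
        have := Real.rpow_pos_of_pos
          (Real.rpow_pos_of_pos (mul_pos (hσ (⟨0, hd⟩ : Fin d)) (hl (B ⟨0, hd⟩))) η) (-1 / η)
        nlinarith [hσ (⟨0, hd⟩ : Fin d)]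
      linarith
    rw [hθl]
    unfold expo
    have := Real.log_neg hjp hj1
    linarith
  have hθm_nonneg : 0 ≤ θm := by
    have hjp := hpos (fun i => (σ i * m (B i)) ^ η)
      (fun i => Real.rpow_pos_of_pos (mul_pos (hσ i) (hm (B i))) _)
    have hj1 : jointF X (fun i => (σ i * m (B i)) ^ η) ≤ 1 := by
      unfold jointF
      rw [← ENNReal.toReal_one]
      exact ENNReal.toReal_mono (by simp) (by
        rw [← measure_univ (μ := (ℙ : Measure Ω))]
        exact measure_mono (Set.subset_univ _))
    rw [hθm]
    unfold expo
    have := Real.log_nonpos hjp.le hj1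
    linarith
  -- epsFun = θl
  have hden : θl + 1 ≠ 0 := by positivity
  have hEpsFun : epsFun B σ η X l = θl := by
    unfold epsFun
    rw [← hθl] at hEl
    rw [hEl]
    rw [show 1 - θl / (θl + 1) = 1 / (θl + 1) by field_simp; ring]
    field_simp
  rw [hEpsFun]
  -- M j0 and Y_m : integrability and pointwise bound
  haveI : Nonempty (Fin d) := ⟨⟨0, hd⟩⟩
  set M : Fin p → Ω → ℝ := blockMax B σ η X with hM
  have hMle : ∀ j ω (v : ℝ), M j ω ≤ v ↔ ∀ i, B i = j → margF (σ i) η (X i ω) ≤ v := by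
    intro j ω v
    rw [hM, blockMax_eq_sup' B σ η X hB j ω, Finset.sup'_le_iff]
    constructor
    · intro h i hi; exact h i (Finset.mem_filter.mpr ⟨Finset.mem_univ i, hi⟩)
    · intro h i hi; exact h i (Finset.mem_filter.mp hi).2
  have hM0 : ∀ j ω, 0 ≤ M j ω := by
    intro j ω
    obtain ⟨i, hi⟩ := hB j
    rw [hM, blockMax_eq_sup' B σ η X hB j ω]
    exact le_trans (margF_nonneg (σ i) η (X i ω))
      (Finset.le_sup' (fun i => margF (σ i) η (X i ω)) (Finset.mem_filter.mpr ⟨Finset.mem_univ i, hi⟩))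
  have hM1 : ∀ j ω, M j ω < 1 := by
    intro j ω
    rw [hM, blockMax_eq_sup' B σ η X hB j ω, Finset.sup'_lt_iff]
    intro i _
    exact margF_lt_one (hσ i) hη0 _
  have hMmeas : ∀ j, Measurable (M j) := by
    intro j
    have : M j = fun ω => (Finset.univ.filter (fun i => B i = j)).sup'
        (blockFinset_nonempty hB j) (fun i => margF (σ i) η (X i ω)) := by
      funext ω; exact blockMax_eq_sup' B σ η X hB j ω
    rw [this]
    exact measurable_finset_sup' _ _ _
      (fun i => (measurable_margF (σ i) η).comp (hX i))
  have hbdd : ∀ ω, BddAbove (Set.range fun j => M j ω ^ m j) :=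
    fun ω => Set.Finite.bddAbove (Set.finite_range _)
  -- integrability facts
  have hint1 : Integrable (fun ω => M j0 ω ^ (1:ℝ)) ℙ := by
    apply Integrable.mono' (integrable_const (1 : ℝ))
    · simp only [Real.rpow_one]
      exact (hMmeas j0).aestronglyMeasurable
    · apply Filter.Eventually.of_forall
      intro ω
      simp only [Real.rpow_one]
      rw [Real.norm_eq_abs, abs_of_nonneg (hM0 j0 ω)]
      exact (hM1 j0 ω).le
  have hintY : Integrable (fun ω => ⨆ j, M j ω ^ m j) ℙ := by
    have hYmeas : Measurable (fun ω => ⨆ j, M j ω ^ m j) := by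
      have : (fun ω => ⨆ j, M j ω ^ m j)
          = fun ω => Finset.univ.sup' Finset.univ_nonempty (fun j => M j ω ^ m j) := by
        funext ω; exact iSup_eq_sup' _
      rw [this]
      apply measurable_finset_sup'
      intro j
      have : (fun ω => M j ω ^ m j)
          = fun ω => if M j ω = 0 then 0 else Real.exp (Real.log (M j ω) * m j) := by
        funext ω
        split_ifs with h
        · rw [h, Real.zero_rpow (hm j).ne']
        · rw [Real.rpow_def_of_pos (lt_of_le_of_ne (hM0 j ω) (Ne.symm h))]
      rw [this]
      exact Measurable.ite ((hMmeas j) (MeasurableSet.singleton 0))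
        measurable_const (((hMmeas j).log.mul measurable_const).exp)
    apply Integrable.mono' (integrable_const (1 : ℝ)) hYmeas.aestronglyMeasurable
    apply Filter.Eventually.of_forall
    intro ω
    have h0 : 0 ≤ ⨆ j, M j ω ^ m j :=
      le_trans (Real.rpow_nonneg (hM0 j0 ω) _) (le_ciSup (hbdd ω) j0)
    rw [Real.norm_eq_abs, abs_of_nonneg h0]
    exact ciSup_le fun j => Real.rpow_le_one (hM0 j ω) (hM1 j ω).le (hm j).le
  -- E0 := ∫ M j0 ^ 1 ≤ θm/(θm+1)
  set E0 : ℝ := ∫ ω, M j0 ω ^ (1:ℝ) ∂ℙ with hE0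
  have hE0nn : 0 ≤ E0 := by
    apply integral_nonneg
    intro ω
    exact Real.rpow_nonneg (hM0 j0 ω) _
  have hE0le : E0 ≤ θm / (θm + 1) := by
    have hmono : ∀ ω, M j0 ω ^ (1:ℝ) ≤ ⨆ j, M j ω ^ m j := by
      intro ω
      have := le_ciSup (hbdd ω) j0
      rwa [hmj0, Real.rpow_one, ← Real.rpow_one (M j0 ω)] at this
    calc E0 ≤ ∫ ω, ⨆ j, M j ω ^ m j ∂ℙ := integral_mono hint1 hintY hmono
      _ = θm / (θm + 1) := by rw [← hθm] at hEm; exact hEm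
  -- epsBlock j0 1 ≤ θm
  have hdenm : (0:ℝ) < θm + 1 := by linarith
  have hE0lt1 : E0 < 1 := lt_of_le_of_lt hE0le (by
    rw [div_lt_one hdenm]; linarith)
  have hepsle : epsBlock B σ η X j0 1 ≤ θm := by
    unfold epsBlock
    rw [← hM, ← hE0]
    rw [div_le_iff₀ (by linarith : (0:ℝ) < 1 - E0)]
    rw [le_div_iff₀ hdenm] at hE0le
    nlinarith [hE0le]
  -- (l j0)⁻¹ * θm ≤ θl
  have hhalf : (l j0)⁻¹ * θm = expo X (fun i => (l j0) ^ η * (σ i * m (B i)) ^ η) := by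
    rw [hθm]
    rw [hhom ((l j0) ^ η) (Real.rpow_pos_of_pos (hl j0) _) _
      (fun i => Real.rpow_pos_of_pos (mul_pos (hσ i) (hm (B i))) _)]
    congr 1
    rw [← Real.rpow_mul (hl j0).le]
    have : η * (-1 / η) = -1 := by field_simp
    rw [this, Real.rpow_neg_one]
  have hscale : (l j0)⁻¹ * θm ≤ θl := by
    rw [hhalf, hθl]
    apply expo_antitone X hpos
    · intro i
      exact Real.rpow_pos_of_pos (mul_pos (hσ i) (hl (B i))) _
    · intro i
      rw [← Real.mul_rpow (hl j0).le (mul_pos (hσ i) (hm (B i))).le]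
      apply Real.rpow_le_rpow (mul_pos (hσ i) (hl (B i))).le _ hη0.le
      have h1 : l (B i) / l j0 ≤ m (B i) := le_max_right _ _
      have h2 : l (B i) ≤ m (B i) * l j0 := by
        rw [div_le_iff₀ (hl j0)] at h1
        linarith
      calc σ i * l (B i) ≤ σ i * (m (B i) * l j0) := by
            exact mul_le_mul_of_nonneg_left h2 (hσ i).le
        _ = l j0 * (σ i * m (B i)) := by ring
  -- conclusion
  calc (⨅ j, (l j)⁻¹ * epsBlock B σ η X j 1)
      ≤ (l j0)⁻¹ * epsBlock B σ η X j0 1 :=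
        ciInf_le (Set.Finite.bddBelow (Set.finite_range _)) j0
    _ ≤ (l j0)⁻¹ * θm :=
        mul_le_mul_of_nonneg_left hepsle (inv_nonneg.mpr (hl j0).le)
    _ ≤ θl := hscale
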